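/- arXiv:1206.0487 — 3 statements merged into one kernel-verified Lean document; each statement's English description precedes it below -/
import Mathlib

section
/- Let r > 0 and k ≥ 1 be a natural number. Let λ : ℕ → ℂ be a sequence of nonzero complex numbers with |λ_n| → ∞, let m : ℕ → ℕ, and let coefficients c_{n,η} ∈ ℂ be given for 0 ≤ η ≤ m_n; write M_n = max_{0≤η≤m_n} |c_{n,η}|. Assume that ∑_n M_n · B(r, λ_n, k, m_n) · (|λ_n| + 1)^k · e^{r·|Im λ_n|} < ∞. Let R > r and suppose there exists N > 0 such that sup over all n with |λ_n| > N of (|Im λ_n| + m_n)/ln(2 + |λ_n|) is strictly less than 1/(R − r). Then the series ∑_n ∑_{η=0}^{m_n} c_{n,η} · e^{λ_n,η} converges in C^{k−1}[−R, R]. -/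
open Complex Filter

/-- The weight `B(R, λ, q, m)` from the paper (it depends only on `R`, `q`, `m`). -/
noncomputable def Bwt (R : ℝ) (_lam : ℂ) (q m : ℕ) : ℝ :=
  if R > 1 then R ^ m
  else if R = 1 then (m : ℝ) + 1
  else min ((q : ℝ) + 1) ((m : ℝ) + 1)

/-- The exponential monomial `e^{λ,η}(t) = (it)^η e^{iλt}`. -/
noncomputable def eMon (lam : ℂ) (η : ℕ) : ℝ → ℂ :=
  fun t => (Complex.I * t) ^ η * Complex.exp (Complex.I * lam * t)

/-- A series of functions `∑ₙ F n` converges in `C^k[-r, r]`: for every `j ≤ k`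
the series of `j`-th derivatives converges absolutely and uniformly on `[-r, r]`. -/
def ConvergesInCk (k : ℕ) (r : ℝ) (F : ℕ → ℝ → ℂ) : Prop :=
  ∀ j ≤ k,
    (∀ t ∈ Set.Icc (-r) r, Summable fun n => ‖iteratedDeriv j (F n) t‖) ∧
    TendstoUniformlyOn
      (fun N t => ∑ n ∈ Finset.range N, iteratedDeriv j (F n) t)
      (fun t => ∑' n, iteratedDeriv j (F n) t) atTop (Set.Icc (-r) r)

open Nat Asymptotics
open scoped NNReal

/-- Cauchy estimate for iterated derivatives of an entire function. -/
lemma cauchy_bound {f : ℂ → ℂ} (hf : Differentiable ℂ f) (j : ℕ) (c : ℂ) {ρ : ℝ} (hρ : 0 < ρ)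
    {C : ℝ} (hC : ∀ z : ℂ, ‖z - c‖ = ρ → ‖f z‖ ≤ C) :
    ‖iteratedDeriv j f c‖ ≤ (j ! : ℝ) * C * ρ⁻¹ ^ j := by
  lift ρ to NNReal using hρ.le with ρ' hρ'
  have hρ0 : (0 : ℝ≥0) < ρ' := by exact_mod_cast hρ
  have h := hf.hasFPowerSeriesOnBall c hρ0
  have h1 := h.factorial_smul (y := (1 : ℂ)) j
  have h2 : iteratedDeriv j f c = (j ! : ℂ) * (cauchyPowerSeries f c ρ' j fun _ => (1 : ℂ)) := by
    rw [iteratedDeriv_eq_iteratedFDeriv, ← h1, nsmul_eq_mul]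
  have hC0 : 0 ≤ C := le_trans (norm_nonneg _) (hC (c + ρ') (by simp [hρ.le]))
  have hA : (2 * Real.pi)⁻¹ * (∫ θ : ℝ in (0)..2 * Real.pi, ‖f (circleMap c ρ' θ)‖) ≤ C := by
    have hint : (∫ θ : ℝ in (0)..2 * Real.pi, ‖f (circleMap c ρ' θ)‖) ≤ 2 * Real.pi * C := by
      have := intervalIntegral.integral_mono_on (a := (0:ℝ)) (b := 2 * Real.pi)
        (f := fun θ => ‖f (circleMap c ρ' θ)‖) (g := fun _ => C) Real.two_pi_pos.le
        (Continuous.intervalIntegrable (μ := MeasureTheory.volume) ((hf.continuous.norm).comp (continuous_circleMap c ρ')) _ _)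
        (intervalIntegrable_const)
        (fun θ _ => hC _ (by rw [circleMap_sub_center, norm_circleMap_zero]; exact abs_of_pos hρ))
      simpa using this
    calc (2 * Real.pi)⁻¹ * ∫ θ : ℝ in (0)..2 * Real.pi, ‖f (circleMap c ρ' θ)‖
        ≤ (2 * Real.pi)⁻¹ * (2 * Real.pi * C) := by
          gcongr
      _ = C := by field_simp
  have h3 : ‖cauchyPowerSeries f c ρ' j fun _ => (1 : ℂ)‖ ≤ C * (ρ' : ℝ)⁻¹ ^ j := by
    refine le_trans ((cauchyPowerSeries f c ρ' j).le_opNorm _) ?_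
    simp only [norm_one, Finset.prod_const_one, mul_one]
    refine le_trans (norm_cauchyPowerSeries_le f c ρ' j) ?_
    have : |(ρ' : ℝ)| = (ρ' : ℝ) := abs_of_pos hρ
    rw [this]
    exact mul_le_mul_of_nonneg_right hA (by positivity)
  calc ‖iteratedDeriv j f c‖ = (j ! : ℝ) * ‖cauchyPowerSeries f c ρ' j fun _ => (1 : ℂ)‖ := by
        rw [h2, norm_mul]; norm_num
    _ ≤ (j ! : ℝ) * (C * (ρ' : ℝ)⁻¹ ^ j) := by gcongr
    _ = (j ! : ℝ) * C * (ρ' : ℝ)⁻¹ ^ j := by ring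
lemma entire_deriv {f : ℂ → ℂ} (hf : Differentiable ℂ f) : Differentiable ℂ (deriv f) := by
  have h : ContDiff ℂ 2 f := hf.contDiff
  have := (contDiff_succ_iff_deriv (n := 1)).mp (h.of_le (by norm_num))
  exact this.2.2.differentiable (by norm_num)

lemma iteratedDeriv_ofReal {f : ℂ → ℂ} (hf : Differentiable ℂ f) (j : ℕ) (t : ℝ) :
    iteratedDeriv j (fun s : ℝ => f s) t = iteratedDeriv j f t := by
  induction j generalizing f with
  | zero => simp
  | succ j ih =>
    rw [iteratedDeriv_succ', iteratedDeriv_succ']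
    have hd : (deriv fun s : ℝ => f ↑s) = fun s : ℝ => deriv f ↑s := by
      funext s
      exact ((hf ↑s).hasDerivAt.comp_ofReal).deriv
    rw [hd]
    exact ih (entire_deriv hf)
lemma one_le_Bwt {R : ℝ} (hR : 0 < R) (lam : ℂ) (q m : ℕ) : 1 ≤ Bwt R lam q m := by
  unfold Bwt
  split_ifs with h1 h2
  · exact one_le_pow₀ h1.le
  · push_cast; linarith
  · refine le_min (by push_cast; linarith) (by push_cast; linarith)

lemma BwtKey {r R : ℝ} (hr : 0 < r) (hR : r < R) (lam : ℂ) (k m : ℕ) :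
    max 1 R ^ m ≤ Bwt r lam k m * Real.exp ((R - r) * m) := by
  have hB1 : 1 ≤ Bwt r lam k m := one_le_Bwt hr lam k m
  have hexp1 : (1:ℝ) ≤ Real.exp (R - r) := by
    rw [← Real.exp_zero]; exact Real.exp_le_exp.mpr (by linarith)
  have hmax : max 1 R ≤ max 1 r * Real.exp (R - r) := by
    rcases le_or_gt R 1 with h | h
    · rw [max_eq_left h]
      calc (1:ℝ) = 1 * 1 := by ring
        _ ≤ max 1 r * Real.exp (R - r) :=
          mul_le_mul (le_max_left _ _) hexp1 zero_le_one
            (le_trans zero_le_one (le_max_left _ _))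
    · rw [max_eq_right h.le]
      set r1 := max 1 r with hr1
      have h11 : 1 ≤ r1 := le_max_left _ _
      have h12 : r1 < R := max_lt h (by linarith)
      have h13 : R - r1 ≤ R - r := by
        have : r ≤ r1 := le_max_right _ _
        linarith
      calc R = r1 * (1 + (R - r1) / r1) := by field_simp; ring
        _ ≤ r1 * (1 + (R - r1)) := by
          have : (R - r1) / r1 ≤ R - r1 := div_le_self (by linarith) h11
          nlinarith
        _ ≤ r1 * Real.exp (R - r1) := by
          have := Real.add_one_le_exp (R - r1)
          nlinarith
        _ ≤ r1 * Real.exp (R - r) := by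
          have := Real.exp_le_exp.mpr h13
          nlinarith [Real.exp_pos (R - r1)]
  have hstep : max 1 r ^ m ≤ Bwt r lam k m := by
    rcases lt_or_ge 1 r with h | h
    · unfold Bwt; rw [if_pos h, max_eq_right h.le]
    · rw [max_eq_left h]
      simpa using hB1
  calc max 1 R ^ m ≤ (max 1 r * Real.exp (R - r)) ^ m := by
        apply pow_le_pow_left₀ (le_trans zero_le_one (le_max_left _ _)) hmax
    _ = max 1 r ^ m * Real.exp ((R - r) * m) := by
        rw [mul_pow, ← Real.exp_nat_mul]; ring_nf
    _ ≤ Bwt r lam k m * Real.exp ((R - r) * m) :=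
        mul_le_mul_of_nonneg_right hstep (Real.exp_nonneg _)
lemma log_pow_rpow_tendsto_zero {s : ℝ} (hs : s < 1) (j : ℕ) (Kd : ℝ) :
    Tendsto (fun y : ℝ => Kd * (Real.log y ^ (j + 1) * y ^ (s - 1))) atTop (nhds 0) := by
  have hδ : (0:ℝ) < (1 - s) / (j + 1) := div_pos (by linarith) (by positivity)
  set δ := (1 - s) / (j + 1) with hδdef
  have h1 : Real.log =o[atTop] fun y : ℝ => y ^ δ := isLittleO_log_rpow_atTop hδ
  have h2 : (fun y : ℝ => Real.log y ^ (j + 1)) =o[atTop] fun y : ℝ => (y ^ δ) ^ (j + 1) :=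
    h1.pow (Nat.succ_pos j)
  have h4 : (fun y : ℝ => Real.log y ^ (j + 1) * y ^ (s - 1)) =o[atTop]
      fun y : ℝ => (y ^ δ) ^ (j + 1) * y ^ (s - 1) :=
    h2.mul_isBigO (isBigO_refl _ _)
  have h5 : (fun y : ℝ => (y ^ δ) ^ (j + 1) * y ^ (s - 1)) =ᶠ[atTop] fun _ => (1:ℝ) := by
    filter_upwards [eventually_gt_atTop (0:ℝ)] with y hy
    rw [← Real.rpow_natCast (y ^ δ) (j + 1), ← Real.rpow_mul hy.le, ← Real.rpow_add hy]
    have hj : ((j:ℝ) + 1) ≠ 0 := by positivity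
    have : δ * (j + 1 : ℕ) + (s - 1) = 0 := by
      rw [hδdef]
      push_cast
      field_simp
      ring
    rw [this, Real.rpow_zero]
  have h6 : (fun y : ℝ => Real.log y ^ (j + 1) * y ^ (s - 1)) =o[atTop] fun _ : ℝ => (1:ℝ) :=
    h4.trans_eventuallyEq h5
  have h7 := (isLittleO_one_iff ℝ).mp h6
  have := h7.const_mul Kd
  simpa using this

set_option maxHeartbeats 1000000 in
theorem lemma21 (r : ℝ) (hr : 0 < r) (k : ℕ) (hk : 1 ≤ k)
    (lam : ℕ → ℂ) (hlam0 : ∀ n, lam n ≠ 0)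
    (hlam : Tendsto (fun n => ‖lam n‖) atTop atTop)
    (m : ℕ → ℕ) (c : ℕ → ℕ → ℂ)
    (M : ℕ → ℝ)
    (hM : ∀ n, M n = (Finset.range (m n + 1)).sup' (by simp) fun η => ‖c n η‖)
    (hsum : Summable fun n =>
      M n * Bwt r (lam n) k (m n) * (‖lam n‖ + 1) ^ k *
        Real.exp (r * |(lam n).im|))
    (R : ℝ) (hR : r < R)
    (hgrow : ∃ N > (0 : ℝ), ∃ θ : ℝ, θ < 1 / (R - r) ∧
      ∀ n, ‖lam n‖ > N →
        (|(lam n).im| + (m n : ℝ)) / Real.log (2 + ‖lam n‖) ≤ θ) :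
    ConvergesInCk (k - 1) R
      (fun n t => ∑ η ∈ Finset.range (m n + 1), c n η * eMon (lam n) η t) := by
  intro j hj
  have hjk : j + 1 ≤ k := by omega
  obtain ⟨N, hN0, θ, hθ, hgb⟩ := hgrow
  have hRr : 0 < R - r := by linarith
  have hR0 : 0 < R := lt_trans hr hR
  set R1 : ℝ := max 1 R with hR1def
  have hR11 : (1:ℝ) ≤ R1 := le_max_left _ _
  have hRR1 : R ≤ R1 := le_max_right _ _
  set A : ℕ → ℝ := fun n => ‖lam n‖ with hAdef
  have hA0 : ∀ n, 0 ≤ A n := fun n => norm_nonneg _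
  set g : ℕ → ℂ → ℂ := fun n z =>
    ∑ η ∈ Finset.range (m n + 1),
      c n η * ((Complex.I * z) ^ η * Complex.exp (Complex.I * lam n * z)) with hgdef
  have hgdiff : ∀ n, Differentiable ℂ (g n) := by
    intro n
    apply Differentiable.fun_sum
    intro η _
    apply Differentiable.const_mul
    exact ((differentiable_id.const_mul Complex.I).pow η).mul
      ((differentiable_id.const_mul (Complex.I * lam n)).cexp)
  have hFg : ∀ n, (fun t : ℝ => ∑ η ∈ Finset.range (m n + 1), c n η * eMon (lam n) η t)
      = fun t : ℝ => g n ↑t := by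
    intro n; funext t; simp only [hgdef, eMon]
  set ρ : ℕ → ℝ := fun n => ((1 + A n) * (1 + (m n : ℝ)))⁻¹ with hρdef
  have hρpos : ∀ n, 0 < ρ n := by
    intro n
    have := hA0 n
    simp only [hρdef]
    positivity
  have hρ1m : ∀ n, ρ n * (1 + (m n : ℝ)) ≤ 1 := by
    intro n
    have h1a : (0:ℝ) < 1 + A n := by have := hA0 n; linarith
    have h1m : (0:ℝ) < 1 + (m n : ℝ) := by positivity
    simp only [hρdef]
    rw [mul_inv, mul_assoc, inv_mul_cancel₀ h1m.ne', mul_one]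
    rw [inv_le_one_iff₀]
    right
    have := hA0 n
    linarith
  have hρ1a : ∀ n, ρ n * (1 + A n) ≤ 1 := by
    intro n
    have h1a : (0:ℝ) < 1 + A n := by have := hA0 n; linarith
    have h1m : (0:ℝ) < 1 + (m n : ℝ) := by positivity
    simp only [hρdef]
    rw [mul_comm (1 + A n) (1 + (m n:ℝ))]
    rw [mul_inv, mul_assoc, inv_mul_cancel₀ h1a.ne', mul_one]
    rw [inv_le_one_iff₀]
    right
    have : (0:ℝ) ≤ (m n : ℝ) := Nat.cast_nonneg _
    linarith
  set Cb : ℕ → ℝ := fun n => ((m n : ℝ) + 1) *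
    (M n * (R1 ^ (m n) * Real.exp 1 * (Real.exp 2 * Real.exp (R * |(lam n).im|)))) with hCdef
  set u : ℕ → ℝ := fun n => (j ! : ℝ) * Cb n * ((1 + A n) * (1 + (m n : ℝ))) ^ j with hudef
  have hMc : ∀ n, ∀ η ∈ Finset.range (m n + 1), ‖c n η‖ ≤ M n := by
    intro n η hη
    rw [hM n]
    exact Finset.le_sup' (fun η => ‖c n η‖) hη
  have hM0 : ∀ n, 0 ≤ M n := fun n =>
    le_trans (norm_nonneg _) (hMc n 0 (by simp))
  -- the key uniform bound
  have key : ∀ n, ∀ t ∈ Set.Icc (-R) R,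
      ‖iteratedDeriv j (fun t => ∑ η ∈ Finset.range (m n + 1), c n η * eMon (lam n) η t) t‖
        ≤ u n := by
    intro n t ht
    rw [hFg n, iteratedDeriv_ofReal (hgdiff n) j t]
    have htR : |t| ≤ R := abs_le.mpr ⟨by linarith [ht.1], ht.2⟩
    have hC : ∀ z : ℂ, ‖z - ↑t‖ = ρ n → ‖g n z‖ ≤ Cb n := by
      intro z hz
      have hzabs : ‖z‖ ≤ R + ρ n := by
        calc ‖z‖ = ‖(z - ↑t) + ↑t‖ := by rw [sub_add_cancel]
          _ ≤ ‖z - ↑t‖ + ‖(↑t : ℂ)‖ := norm_add_le _ _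
          _ = ρ n + |t| := by rw [hz, Complex.norm_real, Real.norm_eq_abs]
          _ ≤ R + ρ n := by linarith
      have hzre : |z.re| ≤ R + ρ n := by
        have h1 : |(z - ↑t).re| ≤ ρ n := by
          rw [← hz]; exact Complex.abs_re_le_norm _
        have h2 : (z - ↑t).re = z.re - t := by simp
        rw [h2] at h1
        cases' abs_le.mp h1 with h3 h4
        cases' abs_le.mp htR with h5 h6
        rw [abs_le]
        constructor <;> linarith
      have hzim : |z.im| ≤ ρ n := by
        have h1 : |(z - ↑t).im| ≤ ρ n := by
          rw [← hz]; exact Complex.abs_im_le_norm _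
        have h2 : (z - ↑t).im = z.im := by simp
        rwa [h2] at h1
      have hterm : ∀ η ∈ Finset.range (m n + 1),
          ‖c n η * ((Complex.I * z) ^ η * Complex.exp (Complex.I * lam n * z))‖ ≤
            M n * (R1 ^ m n * Real.exp 1 * (Real.exp 2 * Real.exp (R * |(lam n).im|))) := by
        intro η hη
        have hηm : η ≤ m n := Nat.lt_succ_iff.mp (Finset.mem_range.mp hη)
        have hηmR : (η : ℝ) ≤ (m n : ℝ) := by exact_mod_cast hηm
        have hpow : ‖z‖ ^ η ≤ R1 ^ m n * Real.exp 1 := by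
          have hz1 : ‖z‖ ≤ R1 * (1 + ρ n) := by
            have h1 : ρ n ≤ R1 * ρ n := le_mul_of_one_le_left (hρpos n).le hR11
            calc ‖z‖ ≤ R + ρ n := hzabs
              _ ≤ R1 + R1 * ρ n := by linarith
              _ = R1 * (1 + ρ n) := by ring
          calc ‖z‖ ^ η ≤ (R1 * (1 + ρ n)) ^ η :=
                pow_le_pow_left₀ (norm_nonneg _) hz1 η
            _ = R1 ^ η * (1 + ρ n) ^ η := mul_pow _ _ _
            _ ≤ R1 ^ m n * Real.exp 1 := by
                apply mul_le_mul (pow_le_pow_right₀ hR11 hηm) ?_ (by positivity) (by positivity)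
                calc (1 + ρ n) ^ η ≤ Real.exp (ρ n) ^ η := by
                      apply pow_le_pow_left₀ (by positivity)
                      linarith [Real.add_one_le_exp (ρ n)]
                  _ = Real.exp (η * ρ n) := (Real.exp_nat_mul _ _).symm
                  _ ≤ Real.exp 1 := by
                      apply Real.exp_le_exp.mpr
                      have h1 := hρ1m n
                      nlinarith [mul_nonneg (by linarith : (0:ℝ) ≤ 1 + (m n:ℝ) - η)
                        (hρpos n).le]
        have hexp : ‖Complex.exp (Complex.I * lam n * z)‖ ≤
            Real.exp 2 * Real.exp (R * |(lam n).im|) := by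
          rw [Complex.norm_exp]
          rw [← Real.exp_add]
          apply Real.exp_le_exp.mpr
          have hre : (Complex.I * lam n * z).re = -((lam n).im * z.re) - (lam n).re * z.im := by
            simp only [Complex.mul_re, Complex.mul_im, Complex.I_re, Complex.I_im,
              zero_mul, one_mul, zero_sub, zero_add]
            ring
          rw [hre]
          have e1 : -((lam n).im * z.re) ≤ R * |(lam n).im| + |(lam n).im| * ρ n := by
            calc -((lam n).im * z.re) ≤ |(lam n).im * z.re| := neg_le_abs _
              _ = |(lam n).im| * |z.re| := abs_mul _ _
              _ ≤ |(lam n).im| * (R + ρ n) :=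
                  mul_le_mul_of_nonneg_left hzre (abs_nonneg _)
              _ = R * |(lam n).im| + |(lam n).im| * ρ n := by ring
          have e2 : -((lam n).re * z.im) ≤ A n * ρ n := by
            calc -((lam n).re * z.im) ≤ |(lam n).re * z.im| := neg_le_abs _
              _ = |(lam n).re| * |z.im| := abs_mul _ _
              _ ≤ A n * ρ n :=
                  mul_le_mul (Complex.abs_re_le_norm _) hzim (abs_nonneg _) (hA0 n)
          have e3 : |(lam n).im| * ρ n ≤ 1 := by
            have h1 : |(lam n).im| ≤ A n := Complex.abs_im_le_norm _
            have h2 := hρ1a n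
            nlinarith [(hρpos n).le, hA0 n]
          have e4 : A n * ρ n ≤ 1 := by
            have h2 := hρ1a n
            nlinarith [(hρpos n).le, hA0 n]
          linarith [e1, e2, e3, e4]
        calc ‖c n η * ((Complex.I * z) ^ η * Complex.exp (Complex.I * lam n * z))‖
            = ‖c n η‖ *
              (‖z‖ ^ η * ‖Complex.exp (Complex.I * lam n * z)‖) := by
              simp only [norm_mul, norm_pow, map_mul,
                Complex.norm_I, one_mul]
          _ ≤ M n * (R1 ^ m n * Real.exp 1 * (Real.exp 2 * Real.exp (R * |(lam n).im|))) := by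
              exact mul_le_mul (hMc n η hη)
                (mul_le_mul hpow hexp (norm_nonneg _) (by positivity))
                (by positivity) (hM0 n)
      calc ‖g n z‖ ≤ ∑ η ∈ Finset.range (m n + 1),
            ‖c n η * ((Complex.I * z) ^ η * Complex.exp (Complex.I * lam n * z))‖ := by
            simp only [hgdef]
            exact norm_sum_le _ _
        _ ≤ ∑ _η ∈ Finset.range (m n + 1),
            M n * (R1 ^ m n * Real.exp 1 * (Real.exp 2 * Real.exp (R * |(lam n).im|))) :=
            Finset.sum_le_sum hterm
        _ = Cb n := by
            simp only [hCdef]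
            rw [Finset.sum_const, Finset.card_range, nsmul_eq_mul]
            push_cast
            ring
    have hcb := cauchy_bound (hgdiff n) j (↑t) (hρpos n) hC
    calc ‖iteratedDeriv j (g n) ↑t‖ ≤ (j ! : ℝ) * Cb n * (ρ n)⁻¹ ^ j := hcb
      _ = u n := by
          simp only [hudef, hρdef, inv_inv]
  -- summability of the bounds
  have hu0 : ∀ n, 0 ≤ u n := by
    intro n
    simp only [hudef]
    have h1 : 0 ≤ Cb n := by
      simp only [hCdef]
      have := hM0 n
      positivity
    have := hA0 n
    positivity
  have husum : Summable u := by
    set a : ℕ → ℝ := fun n => M n * Bwt r (lam n) k (m n) * (‖lam n‖ + 1) ^ k *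
      Real.exp (r * |(lam n).im|) with hadef
    have ha0 : ∀ n, 0 ≤ a n := by
      intro n
      simp only [hadef]
      have h1 := one_le_Bwt hr (lam n) k (m n)
      have h2 := hM0 n
      have h3 : (0:ℝ) ≤ ‖lam n‖ + 1 := by
        have := norm_nonneg (lam n); linarith
      positivity
    set Kc : ℝ := (j ! : ℝ) * (Real.exp 1 * Real.exp 2) with hKcdef
    have hKc0 : 0 ≤ Kc := by simp only [hKcdef]; positivity
    set w : ℕ → ℝ := fun n => (1 + (m n : ℝ)) ^ (j + 1) *
      Real.exp ((R - r) * (|(lam n).im| + (m n : ℝ))) / (1 + A n) with hwdef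
    have hstep1 : ∀ n, u n ≤ Kc * (a n * w n) := by
      intro n
      have h1a : (0:ℝ) < 1 + A n := by have := hA0 n; linarith
      have hBw := BwtKey hr hR (lam n) k (m n)
      have hB1 := one_le_Bwt hr (lam n) k (m n)
      have c2 : (1 + A n) ^ j ≤ (1 + A n) ^ k / (1 + A n) := by
        rw [le_div_iff₀ h1a, ← pow_succ]
        exact pow_le_pow_right₀ (by have := hA0 n; linarith) hjk
      have core : R1 ^ m n * Real.exp (R * |(lam n).im|) * (1 + A n) ^ j ≤
          (Bwt r (lam n) k (m n) * Real.exp ((R - r) * (m n : ℝ))) *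
            Real.exp (R * |(lam n).im|) * ((1 + A n) ^ k / (1 + A n)) := by
        exact mul_le_mul (mul_le_mul_of_nonneg_right hBw (Real.exp_nonneg _)) c2
          (by positivity) (by positivity)
      have hcexp : Real.exp ((R - r) * (m n : ℝ)) * Real.exp (R * |(lam n).im|) =
          Real.exp (r * |(lam n).im|) *
            Real.exp ((R - r) * (|(lam n).im| + (m n : ℝ))) := by
        rw [← Real.exp_add, ← Real.exp_add]
        ring_nf
      have hX0 : 0 ≤ (j ! : ℝ) * (Real.exp 1 * Real.exp 2) *
          (M n * (1 + (m n:ℝ)) ^ (j+1)) := by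
        have := hM0 n
        positivity
      calc u n = (j ! : ℝ) * (Real.exp 1 * Real.exp 2) * (M n * (1 + (m n:ℝ)) ^ (j+1)) *
            (R1 ^ m n * Real.exp (R * |(lam n).im|) * (1 + A n) ^ j) := by
            simp only [hudef, hCdef]
            rw [mul_pow]
            ring
        _ ≤ (j ! : ℝ) * (Real.exp 1 * Real.exp 2) * (M n * (1 + (m n:ℝ)) ^ (j+1)) *
            ((Bwt r (lam n) k (m n) * Real.exp ((R - r) * (m n : ℝ))) *
              Real.exp (R * |(lam n).im|) * ((1 + A n) ^ k / (1 + A n))) :=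
            mul_le_mul_of_nonneg_left core hX0
        _ = (j ! : ℝ) * (Real.exp 1 * Real.exp 2) * (M n * (1 + (m n:ℝ)) ^ (j+1)) *
            (Bwt r (lam n) k (m n) *
              (Real.exp ((R - r) * (m n : ℝ)) * Real.exp (R * |(lam n).im|)) *
              ((1 + A n) ^ k / (1 + A n))) := by ring
        _ = Kc * (a n * w n) := by
            rw [hcexp]
            simp only [hKcdef, hadef, hwdef]
            ring
    have hs1 : (R - r) * θ < 1 := by
      have h := (lt_div_iff₀ hRr).mp hθ
      linarith
    have hev : ∀ᶠ n in atTop, w n ≤ 1 := by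
      have htend := log_pow_rpow_tendsto_zero (s := (R - r) * θ) hs1 j (2 * (1 + |θ|) ^ (j + 1))
      have hcomp : Tendsto (fun n => 2 + A n) atTop atTop :=
        tendsto_atTop_add_const_left _ 2 hlam
      have htend2 : Tendsto (fun n => 2 * (1 + |θ|) ^ (j + 1) *
          (Real.log (2 + A n) ^ (j + 1) * (2 + A n) ^ ((R - r) * θ - 1))) atTop (nhds 0) :=
        htend.comp hcomp
      have hevsmall : ∀ᶠ n in atTop, 2 * (1 + |θ|) ^ (j + 1) *
          (Real.log (2 + A n) ^ (j + 1) * (2 + A n) ^ ((R - r) * θ - 1)) < 1 := by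
        have hmem : Set.Iio (1:ℝ) ∈ nhds (0:ℝ) := Iio_mem_nhds (by norm_num)
        exact htend2.eventually hmem
      have hevN : ∀ᶠ n in atTop, A n > max N (Real.exp 1) := hlam.eventually_gt_atTop _
      filter_upwards [hevsmall, hevN] with n hsm hn
      have hNn : A n > N := lt_of_le_of_lt (le_max_left _ _) hn
      have hen : Real.exp 1 < A n := lt_of_le_of_lt (le_max_right _ _) hn
      have hy0 : (0:ℝ) < 2 + A n := by have := hA0 n; linarith
      set L : ℝ := Real.log (2 + A n) with hLdef
      have hL1 : 1 ≤ L := by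
        rw [hLdef, Real.le_log_iff_exp_le hy0]
        linarith
      have hL0 : 0 < L := by linarith
      have himm : |(lam n).im| + (m n : ℝ) ≤ θ * L := by
        have h := hgb n hNn
        rw [div_le_iff₀ hL0] at h
        exact h
      have hmθL : (m n : ℝ) ≤ θ * L := by
        have := abs_nonneg (lam n).im
        linarith
      have hθL0 : 0 ≤ θ * L := le_trans (Nat.cast_nonneg _) hmθL
      have hθθ : θ * L ≤ |θ| * L := by
        have h := le_abs_self θ
        nlinarith
      have h1a : (0:ℝ) < 1 + A n := by have := hA0 n; linarith
      have step1 : w n ≤ ((1 + |θ|) * L) ^ (j + 1) *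
          Real.exp ((R - r) * θ * L) / (1 + A n) := by
        simp only [hwdef]
        rw [div_le_div_iff_of_pos_right h1a]
        apply mul_le_mul
        · apply pow_le_pow_left₀ (by positivity)
          nlinarith [hθθ, hmθL, hL1]
        · apply Real.exp_le_exp.mpr
          nlinarith [himm, hRr.le]
        · positivity
        · positivity
      have hEy : Real.exp ((R - r) * θ * L) / (2 + A n) = (2 + A n) ^ ((R - r) * θ - 1) := by
        rw [Real.rpow_def_of_pos hy0]
        nth_rewrite 1 [show (2 + A n) = Real.exp L by rw [hLdef, Real.exp_log hy0]]
        rw [← Real.exp_sub]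
        congr 1
        rw [hLdef]
        ring
      have hfrac : (1 + A n)⁻¹ ≤ 2 / (2 + A n) := by
        rw [inv_eq_one_div, div_le_div_iff₀ h1a hy0]
        linarith [hA0 n]
      have step2 : ((1 + |θ|) * L) ^ (j + 1) * Real.exp ((R - r) * θ * L) / (1 + A n) ≤
          2 * (1 + |θ|) ^ (j + 1) * (L ^ (j + 1) * (2 + A n) ^ ((R - r) * θ - 1)) := by
        have hX0 : (0:ℝ) ≤ (1 + |θ|) ^ (j + 1) * L ^ (j + 1) *
            Real.exp ((R - r) * θ * L) :=
          mul_nonneg (mul_nonneg (by positivity) (pow_nonneg hL0.le _)) (Real.exp_nonneg _)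
        calc ((1 + |θ|) * L) ^ (j + 1) * Real.exp ((R - r) * θ * L) / (1 + A n)
            = ((1 + |θ|) ^ (j + 1) * L ^ (j + 1) * Real.exp ((R - r) * θ * L)) *
              (1 + A n)⁻¹ := by rw [mul_pow]; ring
          _ ≤ ((1 + |θ|) ^ (j + 1) * L ^ (j + 1) * Real.exp ((R - r) * θ * L)) *
              (2 / (2 + A n)) := mul_le_mul_of_nonneg_left hfrac hX0
          _ = 2 * (1 + |θ|) ^ (j + 1) *
              (L ^ (j + 1) * (Real.exp ((R - r) * θ * L) / (2 + A n))) := by ring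
          _ = 2 * (1 + |θ|) ^ (j + 1) * (L ^ (j + 1) * (2 + A n) ^ ((R - r) * θ - 1)) := by
              rw [hEy]
      exact le_of_lt (lt_of_le_of_lt (step1.trans step2) hsm)
    apply Summable.of_norm_bounded_eventually_nat (g := fun n => Kc * a n) (hsum.mul_left Kc)
    filter_upwards [hev] with n hw
    rw [Real.norm_of_nonneg (hu0 n)]
    calc u n ≤ Kc * (a n * w n) := hstep1 n
      _ ≤ Kc * (a n * 1) :=
          mul_le_mul_of_nonneg_left (mul_le_mul_of_nonneg_left hw (ha0 n)) hKc0
      _ = Kc * a n := by ring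
  constructor
  · intro t ht
    exact Summable.of_nonneg_of_le (fun n => norm_nonneg _) (fun n => key n t ht) husum
  · exact tendstoUniformlyOn_tsum_nat husum (fun n t ht => key n t ht)
end

section
/- Let λ ∈ ℂ, let η, j ∈ ℕ, and let r > 0. Then for every t ∈ ℝ with |t| ≤ r, the j-th derivative of the function e^{λ,η}(t) = (it)^η e^{iλt} satisfies |(d/dt)^j ((it)^η e^{iλt})| ≤ (1 + η)^j · (max{r, 1})^η · (1 + |λ|)^j · e^{r·|Im λ|}. -/
open Complex

open Finset
noncomputable def coefE (lam : ℂ) (η : ℕ) : ℕ → ℕ → ℂ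
  | 0, k => if k = η then 1 else 0
  | (j+1), k => Complex.I * ((k+1 : ℕ) : ℂ) * coefE lam η j (k+1) + Complex.I * lam * coefE lam η j k

lemma coefE_vanish (lam : ℂ) (η : ℕ) : ∀ j k, η < k → coefE lam η j k = 0 := by
  intro j
  induction j with
  | zero => intro k hk; simp [coefE, Nat.ne_of_gt hk, (Nat.ne_of_gt hk).symm]
  | succ j ih =>
    intro k hk
    simp [coefE, ih k hk, ih (k+1) (Nat.lt_succ_of_lt hk)]

lemma hasDerivAt_term (lam : ℂ) (k : ℕ) (t : ℝ) :
    HasDerivAt (fun s : ℝ => (Complex.I * s) ^ k * Complex.exp (Complex.I * lam * s))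
      ((k : ℂ) * (Complex.I * t) ^ (k - 1) * Complex.I * Complex.exp (Complex.I * lam * t)
        + (Complex.I * t) ^ k * (Complex.I * lam * Complex.exp (Complex.I * lam * t))) t := by
  have h1 : HasDerivAt (fun z : ℂ => Complex.I * z) Complex.I (t : ℂ) := by
    simpa using (hasDerivAt_id (t : ℂ)).const_mul Complex.I
  have h2 : HasDerivAt (fun z : ℂ => (Complex.I * z) ^ k)
      ((k : ℂ) * (Complex.I * t) ^ (k - 1) * Complex.I) (t : ℂ) := h1.pow k
  have h3 : HasDerivAt (fun z : ℂ => Complex.I * lam * z) (Complex.I * lam) (t : ℂ) := by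
    simpa using (hasDerivAt_id (t : ℂ)).const_mul (Complex.I * lam)
  have h4 : HasDerivAt (fun z : ℂ => Complex.exp (Complex.I * lam * z))
      (Complex.I * lam * Complex.exp (Complex.I * lam * t)) (t : ℂ) := by
    simpa [mul_comm] using h3.cexp
  exact (h2.mul h4).comp_ofReal

lemma iteratedDeriv_eMon (lam : ℂ) (η j : ℕ) :
    iteratedDeriv j (eMon lam η) = fun t : ℝ =>
      ∑ k ∈ range (η + 1), coefE lam η j k * (Complex.I * t) ^ k
        * Complex.exp (Complex.I * lam * t) := by
  induction j with
  | zero =>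
    funext t
    simp only [iteratedDeriv_zero, eMon]
    rw [Finset.sum_eq_single η]
    · simp [coefE]
    · intro b _ hb; simp [coefE, hb]
    · intro h; simp at h
  | succ j ih =>
    funext t
    rw [iteratedDeriv_succ, ih]
    have hder : HasDerivAt (fun t : ℝ =>
        ∑ k ∈ range (η + 1), coefE lam η j k * (Complex.I * (t : ℂ)) ^ k
          * Complex.exp (Complex.I * lam * t))
        (∑ k ∈ range (η + 1), coefE lam η j k *
          ((k : ℂ) * (Complex.I * t) ^ (k - 1) * Complex.I * Complex.exp (Complex.I * lam * t)
            + (Complex.I * t) ^ k * (Complex.I * lam * Complex.exp (Complex.I * lam * t)))) t := by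
      apply HasDerivAt.fun_sum
      intro k _
      simpa [mul_assoc, mul_add] using (hasDerivAt_term lam k t).const_mul (coefE lam η j k)
    rw [hder.deriv]
    simp only [mul_add, Finset.sum_add_distrib, coefE, add_mul]
    congr 1
    · rw [Finset.sum_range_succ' (fun k => coefE lam η j k *
          ((k : ℂ) * (Complex.I * t) ^ (k - 1) * Complex.I * Complex.exp (Complex.I * lam * t)))]
      rw [Finset.sum_range_succ (fun k => Complex.I * ((k+1 : ℕ) : ℂ) * coefE lam η j (k+1) *
          (Complex.I * t) ^ k * Complex.exp (Complex.I * lam * t))]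
      simp only [Nat.cast_zero, zero_mul, mul_zero, add_zero,
        coefE_vanish lam η j (η+1) (Nat.lt_succ_self η), zero_mul, mul_zero]
      apply Finset.sum_congr rfl
      intro k _
      push_cast
      ring
    · apply Finset.sum_congr rfl
      intro k _
      ring

lemma coefE_sum_bound (lam : ℂ) (η : ℕ) : ∀ j,
    ∑ k ∈ range (η + 1), ‖coefE lam η j k‖ ≤ ((1 + η) * (1 + ‖lam‖)) ^ j := by
  intro j
  induction j with
  | zero =>
    rw [pow_zero, Finset.sum_eq_single η]
    · simp [coefE]
    · intro b _ hb; simp [coefE, hb]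
    · intro h; simp at h
  | succ j ih =>
    have hlam : ‖lam‖ = ‖lam‖ := rfl
    have h1 : ∀ k ∈ range (η + 1), ‖coefE lam η (j+1) k‖ ≤
        ((1:ℝ) + η) * ‖coefE lam η j (k+1)‖ + ‖lam‖ * ‖coefE lam η j k‖ := by
      intro k hk
      show ‖Complex.I * ((k+1 : ℕ) : ℂ) * coefE lam η j (k+1) + Complex.I * lam * coefE lam η j k‖ ≤ _
      refine (norm_add_le _ _).trans (add_le_add ?_ ?_)
      · rw [norm_mul, norm_mul]
        have e1 : ‖Complex.I‖ = 1 := by simp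
        have e2 : ‖(((k+1 : ℕ)) : ℂ)‖ = (k:ℝ)+1 := by
          rw [show (((k+1 : ℕ)) : ℂ) = (((k:ℝ)+1 : ℝ) : ℂ) by push_cast; ring]
          rw [Complex.norm_real, Real.norm_of_nonneg (by positivity)]
        rw [e1, e2, one_mul]
        have hk' : (k:ℝ) + 1 ≤ 1 + η := by
          have h := Nat.lt_succ_iff.mp (Finset.mem_range.mp hk)
          have : (k:ℝ) ≤ η := by exact_mod_cast h
          linarith
        exact mul_le_mul_of_nonneg_right hk' (norm_nonneg _)
      · rw [norm_mul, norm_mul]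
        simp
    have hS : (0:ℝ) ≤ ∑ k ∈ range (η + 1), ‖coefE lam η j k‖ :=
      Finset.sum_nonneg fun _ _ => norm_nonneg _
    have hshift : ∑ k ∈ range (η + 1), ‖coefE lam η j (k+1)‖ ≤
        ∑ k ∈ range (η + 1), ‖coefE lam η j k‖ := by
      have e : ∑ k ∈ range (η + 2), ‖coefE lam η j k‖
          = ∑ k ∈ range (η + 1), ‖coefE lam η j (k+1)‖ + ‖coefE lam η j 0‖ :=
        Finset.sum_range_succ' (fun k => ‖coefE lam η j k‖) (η+1)
      have e2 : ∑ k ∈ range (η + 2), ‖coefE lam η j k‖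
          = ∑ k ∈ range (η + 1), ‖coefE lam η j k‖ := by
        rw [Finset.sum_range_succ, coefE_vanish lam η j (η+1) (Nat.lt_succ_self η)]
        simp
      nlinarith [norm_nonneg (coefE lam η j 0)]
    have key : ∑ k ∈ range (η + 1), ‖coefE lam η (j+1) k‖ ≤
        ((1 + η) + ‖lam‖) * (∑ k ∈ range (η + 1), ‖coefE lam η j k‖) := by
      calc ∑ k ∈ range (η + 1), ‖coefE lam η (j+1) k‖
          ≤ ∑ k ∈ range (η + 1), (((1:ℝ) + η) * ‖coefE lam η j (k+1)‖
              + ‖lam‖ * ‖coefE lam η j k‖) := Finset.sum_le_sum h1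
        _ = (1 + η) * (∑ k ∈ range (η + 1), ‖coefE lam η j (k+1)‖)
              + ‖lam‖ * (∑ k ∈ range (η + 1), ‖coefE lam η j k‖) := by
            rw [Finset.sum_add_distrib, Finset.mul_sum, Finset.mul_sum]
        _ ≤ (1 + η) * (∑ k ∈ range (η + 1), ‖coefE lam η j k‖)
              + ‖lam‖ * (∑ k ∈ range (η + 1), ‖coefE lam η j k‖) := by
            have : (0:ℝ) ≤ 1 + η := by positivity
            nlinarith
        _ = _ := by ring
    have hη : (0:ℝ) ≤ (η:ℝ) := Nat.cast_nonneg η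
    have hl : (0:ℝ) ≤ ‖lam‖ := norm_nonneg lam
    calc ∑ k ∈ range (η + 1), ‖coefE lam η (j+1) k‖
        ≤ ((1 + η) + ‖lam‖) * (∑ k ∈ range (η + 1), ‖coefE lam η j k‖) := key
      _ ≤ ((1 + η) * (1 + ‖lam‖)) * (((1 + η) * (1 + ‖lam‖)) ^ j) := by
          apply mul_le_mul _ (hlam ▸ ih) hS (by positivity)
          nlinarith
      _ = ((1 + η) * (1 + ‖lam‖)) ^ (j+1) := by rw [hlam, pow_succ]; ring

theorem eMon_deriv_bound (lam : ℂ) (η j : ℕ) (r : ℝ) (hr : 0 < r) :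
    ∀ t : ℝ, |t| ≤ r →
      ‖iteratedDeriv j (eMon lam η) t‖ ≤
        ((1 : ℝ) + η) ^ j * (max r 1) ^ η * (1 + ‖lam‖) ^ j *
          Real.exp (r * |lam.im|) := by
  intro t ht
  rw [iteratedDeriv_eMon]
  beta_reduce
  have hm1 : (1:ℝ) ≤ max r 1 := le_max_right r 1
  have hterm : ∀ k ∈ range (η + 1),
      ‖coefE lam η j k * (Complex.I * t) ^ k * Complex.exp (Complex.I * lam * t)‖ ≤
        ‖coefE lam η j k‖ * ((max r 1) ^ η * Real.exp (r * |lam.im|)) := by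
    intro k hk
    rw [norm_mul, norm_mul, mul_assoc]
    refine mul_le_mul_of_nonneg_left ?_ (norm_nonneg _)
    have hx : ‖(Complex.I * (t:ℂ)) ^ k‖ ≤ (max r 1) ^ η := by
      rw [norm_pow, norm_mul]
      have : ‖(t:ℂ)‖ = |t| := by rw [Complex.norm_real, Real.norm_eq_abs]
      rw [show ‖Complex.I‖ = 1 by simp, one_mul, this]
      calc |t| ^ k ≤ (max r 1) ^ k :=
            pow_le_pow_left₀ (abs_nonneg t) (ht.trans (le_max_left r 1)) k
        _ ≤ (max r 1) ^ η :=
            pow_le_pow_right₀ hm1 (Nat.lt_succ_iff.mp (Finset.mem_range.mp hk))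
    have hE : ‖Complex.exp (Complex.I * lam * t)‖ ≤ Real.exp (r * |lam.im|) := by
      rw [Complex.norm_exp]
      apply Real.exp_le_exp.mpr
      have : (Complex.I * lam * t).re = -(t * lam.im) := by
        simp [Complex.mul_re, Complex.mul_im]
        ring
      rw [this]
      calc -(t * lam.im) ≤ |t * lam.im| := neg_le_abs _
        _ = |t| * |lam.im| := abs_mul t lam.im
        _ ≤ r * |lam.im| := mul_le_mul_of_nonneg_right ht (abs_nonneg _)
    exact mul_le_mul hx hE (norm_nonneg _) (by positivity)
  calc ‖∑ k ∈ range (η + 1), coefE lam η j k * (Complex.I * t) ^ k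
          * Complex.exp (Complex.I * lam * t)‖
      ≤ ∑ k ∈ range (η + 1), ‖coefE lam η j k * (Complex.I * t) ^ k
          * Complex.exp (Complex.I * lam * t)‖ := norm_sum_le _ _
    _ ≤ ∑ k ∈ range (η + 1),
          ‖coefE lam η j k‖ * ((max r 1) ^ η * Real.exp (r * |lam.im|)) :=
        Finset.sum_le_sum hterm
    _ = (∑ k ∈ range (η + 1), ‖coefE lam η j k‖) * ((max r 1) ^ η * Real.exp (r * |lam.im|)) := by
        rw [← Finset.sum_mul]
    _ ≤ ((1 + η) * (1 + ‖lam‖)) ^ j * ((max r 1) ^ η * Real.exp (r * |lam.im|)) := by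
        apply mul_le_mul_of_nonneg_right (coefE_sum_bound lam η j) (by positivity)
    _ = ((1 : ℝ) + η) ^ j * (max r 1) ^ η * (1 + ‖lam‖) ^ j *
          Real.exp (r * |lam.im|) := by rw [mul_pow]; ring
end

section
/- Let r > 0, let k ∈ ℕ, let γ > 0, let A > 0, and let q ∈ ℕ with q < k − 2 − γ. Let λ : ℕ → ℂ be a sequence of nonzero complex numbers with |λ_n| → ∞, let m : ℕ → ℕ, let σ : ℕ → [0, ∞), and let coefficients c_{n,η} ∈ ℂ for 0 ≤ η ≤ m_n satisfy |c_{n,η}| ≤ A · σ_n · (1 + |λ_n|)^{γ − k} for all n and all 0 ≤ η ≤ m_n. Assume that ∑_n σ_n · B(r, λ_n, q + 1, m_n) · (|λ_n| + 1)^{γ − k + q + 1} · e^{r·|Im λ_n|} < ∞. Let R > r and suppose there exists N > 0 such that sup over all n with |λ_n| > N of (|Im λ_n| + m_n)/ln(2 + |λ_n|) is strictly less than 1/(R − r). Then the series ∑_n ∑_{η=0}^{m_n} c_{n,η} · e^{λ_n,η} converges in C^q[−R, R]. -/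
open Complex Filter

lemma eMon_contDiff (lam : ℂ) (η : ℕ) : ContDiff ℝ (⊤ : WithTop ℕ∞) (eMon lam η) := by
  unfold eMon
  have h1 : ContDiff ℝ (⊤ : WithTop ℕ∞) (fun s : ℝ => (s : ℂ)) := ofRealCLM.contDiff
  exact ((contDiff_const.mul h1).pow η).mul (Complex.contDiff_exp.comp (contDiff_const.mul h1))

lemma eMon_hasDerivAt (lam : ℂ) (η : ℕ) (t : ℝ) :
    HasDerivAt (eMon lam η) ((η : ℂ) * Complex.I * eMon lam (η - 1) t
      + Complex.I * lam * eMon lam η t) t := by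
  have h1 : HasDerivAt (fun z : ℂ => (Complex.I * z) ^ η)
      ((η : ℂ) * (Complex.I * (t : ℂ)) ^ (η - 1) * Complex.I) ((t : ℝ) : ℂ) := by
    simpa using ((hasDerivAt_id ((t : ℝ) : ℂ)).const_mul Complex.I).fun_pow η
  have h2 : HasDerivAt (fun z : ℂ => Complex.exp (Complex.I * lam * z))
      (Complex.exp (Complex.I * lam * (t : ℂ)) * (Complex.I * lam)) ((t : ℝ) : ℂ) := by
    simpa using ((hasDerivAt_id ((t : ℝ) : ℂ)).const_mul (Complex.I * lam)).cexp
  have h := ((h1.fun_mul h2).comp_ofReal : HasDerivAt (fun y : ℝ => _) _ t)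
  unfold eMon
  convert h using 1
  ring

lemma eMon_deriv (lam : ℂ) (η : ℕ) :
    deriv (eMon lam η) = fun t => (η : ℂ) * Complex.I * eMon lam (η - 1) t
      + Complex.I * lam * eMon lam η t :=
  funext fun t => (eMon_hasDerivAt lam η t).deriv

lemma iteratedDeriv_add' {f g : ℝ → ℂ} {j : ℕ} (hf : ContDiff ℝ (⊤ : WithTop ℕ∞) f)
    (hg : ContDiff ℝ (⊤ : WithTop ℕ∞) g) (t : ℝ) :
    iteratedDeriv j (fun s => f s + g s) t = iteratedDeriv j f t + iteratedDeriv j g t := by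
  simp only [← iteratedDerivWithin_univ]
  exact iteratedDerivWithin_add (n := j) (Set.mem_univ t) uniqueDiffOn_univ
    ((hf.of_le le_top).contDiffWithinAt) ((hg.of_le le_top).contDiffWithinAt)

lemma iteratedDeriv_cmul {f : ℝ → ℂ} {j : ℕ} (hf : ContDiff ℝ (⊤ : WithTop ℕ∞) f) (c : ℂ) (t : ℝ) :
    iteratedDeriv j (fun s => c * f s) t = c * iteratedDeriv j f t := by
  simp only [← iteratedDerivWithin_univ]
  have := iteratedDerivWithin_fun_const_smul (𝕜 := ℝ) (F := ℂ) (R := ℂ) (n := j) (Set.mem_univ t)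
    uniqueDiffOn_univ c ((hf.of_le le_top).contDiffWithinAt)
  simpa [smul_eq_mul] using this

lemma iteratedDeriv_zero_fun' {j : ℕ} : iteratedDeriv j (fun _ : ℝ => (0 : ℂ)) = fun _ => 0 := by
  induction j with
  | zero => funext y; simp [iteratedDeriv_zero]
  | succ n ih =>
    rw [iteratedDeriv_succ']
    have : deriv (fun _ : ℝ => (0 : ℂ)) = fun _ : ℝ => (0 : ℂ) := funext fun y => deriv_const y 0
    rw [this, ih]

lemma iteratedDeriv_fsum {ι : Type*} (s : Finset ι) (f : ι → ℝ → ℂ) {j : ℕ}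
    (hf : ∀ i ∈ s, ContDiff ℝ (⊤ : WithTop ℕ∞) (f i)) (t : ℝ) :
    iteratedDeriv j (fun x => ∑ i ∈ s, f i x) t = ∑ i ∈ s, iteratedDeriv j (f i) t := by
  classical
  induction s using Finset.cons_induction with
  | empty => simp [iteratedDeriv_zero_fun']
  | cons a s ha ih =>
    simp only [Finset.sum_cons]
    rw [iteratedDeriv_add' (hf a (Finset.mem_cons_self a s))
      (ContDiff.sum fun i hi => hf i (Finset.mem_cons_of_mem hi)) t,
      ih (fun i hi => hf i (Finset.mem_cons_of_mem hi))]

lemma eMon_bound (lam : ℂ) : ∀ (j η : ℕ) (t : ℝ),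
    ‖iteratedDeriv j (eMon lam η) t‖ ≤
      ((η : ℝ) + ‖lam‖) ^ j * (max 1 |t|) ^ η * Real.exp (|lam.im| * |t|) := by
  intro j
  induction j with
  | zero =>
    intro η t
    rw [iteratedDeriv_zero]
    unfold eMon
    rw [norm_mul, norm_pow, pow_zero, one_mul]
    have h1 : ‖Complex.I * (t : ℂ)‖ = |t| := by
      simp
    have h2 : ‖Complex.exp (Complex.I * lam * t)‖ ≤ Real.exp (|lam.im| * |t|) := by
      rw [Complex.norm_exp]
      apply Real.exp_le_exp.2
      have : (Complex.I * lam * (t : ℂ)).re = -lam.im * t := by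
        simp [Complex.mul_re, Complex.mul_im]
      rw [this]
      calc -lam.im * t ≤ |(-lam.im) * t| := le_abs_self _
        _ = |lam.im| * |t| := by rw [abs_mul, abs_neg]
    rw [h1]
    have hb : |t| ^ η ≤ (max 1 |t|) ^ η :=
      pow_le_pow_left₀ (abs_nonneg t) (le_max_right 1 |t|) η
    calc |t| ^ η * ‖Complex.exp (Complex.I * lam * t)‖
        ≤ (max 1 |t|) ^ η * Real.exp (|lam.im| * |t|) :=
          mul_le_mul hb h2 (norm_nonneg _) (by positivity)
  | succ j ih =>
    intro η t
    rw [iteratedDeriv_succ', eMon_deriv]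
    have hsplit : iteratedDeriv j (fun s => (η : ℂ) * Complex.I * eMon lam (η - 1) s
          + Complex.I * lam * eMon lam η s) t
        = (η : ℂ) * Complex.I * iteratedDeriv j (eMon lam (η - 1)) t
          + Complex.I * lam * iteratedDeriv j (eMon lam η) t := by
      rw [iteratedDeriv_add' (contDiff_const.mul (eMon_contDiff lam (η - 1)))
        (contDiff_const.mul (eMon_contDiff lam η)) t,
        iteratedDeriv_cmul (eMon_contDiff lam (η - 1)) _ t,
        iteratedDeriv_cmul (eMon_contDiff lam η) _ t]
    rw [hsplit]
    set a := ‖lam‖ with ha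
    set M := max 1 |t| with hM
    set E := Real.exp (|lam.im| * |t|) with hE
    have hM1 : (1 : ℝ) ≤ M := le_max_left _ _
    have ha0 : 0 ≤ a := norm_nonneg lam
    have hE0 : 0 ≤ E := Real.exp_nonneg _
    have h1 : ‖(η : ℂ) * Complex.I * iteratedDeriv j (eMon lam (η - 1)) t‖
        ≤ (η : ℝ) * (((η : ℝ) + a) ^ j * M ^ η * E) := by
      rw [norm_mul]
      have hn : ‖(η : ℂ) * Complex.I‖ = (η : ℝ) := by
        simp
      rw [hn]
      apply mul_le_mul_of_nonneg_left _ (Nat.cast_nonneg η)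
      calc ‖iteratedDeriv j (eMon lam (η - 1)) t‖
          ≤ (((η - 1 : ℕ) : ℝ) + a) ^ j * M ^ (η - 1) * E := ih (η - 1) t
        _ ≤ ((η : ℝ) + a) ^ j * M ^ η * E := by
            apply mul_le_mul_of_nonneg_right _ hE0
            apply mul_le_mul
            · apply pow_le_pow_left₀ (by positivity)
              have : ((η - 1 : ℕ) : ℝ) ≤ (η : ℝ) := Nat.cast_le.2 (Nat.sub_le η 1)
              linarith
            · exact pow_le_pow_right₀ hM1 (Nat.sub_le η 1)
            · positivity
            · positivity
    have h2 : ‖Complex.I * lam * iteratedDeriv j (eMon lam η) t‖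
        ≤ a * (((η : ℝ) + a) ^ j * M ^ η * E) := by
      rw [norm_mul]
      have hn : ‖Complex.I * lam‖ = a := by simp [ha]
      rw [hn]
      exact mul_le_mul_of_nonneg_left (ih η t) ha0
    calc ‖(η : ℂ) * Complex.I * iteratedDeriv j (eMon lam (η - 1)) t
          + Complex.I * lam * iteratedDeriv j (eMon lam η) t‖
        ≤ ‖(η : ℂ) * Complex.I * iteratedDeriv j (eMon lam (η - 1)) t‖
          + ‖Complex.I * lam * iteratedDeriv j (eMon lam η) t‖ := norm_add_le _ _
      _ ≤ (η : ℝ) * (((η : ℝ) + a) ^ j * M ^ η * E)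
          + a * (((η : ℝ) + a) ^ j * M ^ η * E) := add_le_add h1 h2
      _ = ((η : ℝ) + a) ^ (j + 1) * M ^ η * E := by ring

lemma Bwt_pos {R : ℝ} (hR : 0 < R) (lam : ℂ) (q m : ℕ) : 0 < Bwt R lam q m := by
  unfold Bwt
  split_ifs with h1 h2
  · positivity
  · positivity
  · exact lt_min (by positivity) (by positivity)

lemma maxpow_le {r R : ℝ} (hr : 0 < r) (hR : r < R) (q M : ℕ) (lam : ℂ) :
    (max 1 R) ^ M ≤ Bwt r lam q M * Real.exp ((R - r) * M) := by
  rcases lt_or_ge 1 r with hr1 | hr1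
  · have hB : Bwt r lam q M = r ^ M := by unfold Bwt; rw [if_pos hr1]
    have hmax : max 1 R = R := max_eq_right (by linarith)
    rw [hB, hmax]
    have hrpos : (0 : ℝ) < R / r := div_pos (lt_trans hr hR) hr
    have hrr : R / r ≤ Real.exp (R - r) := by
      rw [← Real.exp_log hrpos]
      apply Real.exp_le_exp.2
      have h1 := Real.log_le_sub_one_of_pos hrpos
      have h2 : R / r - 1 ≤ R - r := by
        have he : R / r - 1 = (R - r) / r := by field_simp
        rw [he]
        exact div_le_self (by linarith) (by linarith)
      linarith
    have hmc : r * (R / r) = R := by field_simp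
    calc R ^ M = r ^ M * (R / r) ^ M := by rw [← mul_pow, hmc]
      _ ≤ r ^ M * (Real.exp (R - r)) ^ M :=
          mul_le_mul_of_nonneg_left (pow_le_pow_left₀ hrpos.le hrr M) (pow_nonneg hr.le M)
      _ = r ^ M * Real.exp ((R - r) * M) := by
          rw [← Real.exp_nat_mul, mul_comm ((M : ℝ)) (R - r)]
  · have hB : 1 ≤ Bwt r lam q M := by
      unfold Bwt
      rw [if_neg (by push_neg; exact hr1)]
      split_ifs with h
      · linarith [Nat.cast_nonneg (α := ℝ) M]
      · exact le_min (by linarith [Nat.cast_nonneg (α := ℝ) q])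
          (by linarith [Nat.cast_nonneg (α := ℝ) M])
    have hmax : max 1 R ≤ Real.exp (R - r) := by
      have h := Real.add_one_le_exp (R - r)
      apply max_le
      · linarith
      · linarith
    calc (max 1 R) ^ M ≤ (Real.exp (R - r)) ^ M :=
        pow_le_pow_left₀ (le_trans zero_le_one (le_max_left 1 R)) hmax M
      _ = Real.exp ((R - r) * M) := by rw [← Real.exp_nat_mul, mul_comm ((M : ℝ)) (R - r)]
      _ ≤ Bwt r lam q M * Real.exp ((R - r) * M) :=
          le_mul_of_one_le_left (Real.exp_nonneg _) hB

set_option maxHeartbeats 1000000 in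
theorem main_theorem (r : ℝ) (hr : 0 < r) (k : ℕ) (γ : ℝ) (hγ : 0 < γ)
    (A : ℝ) (hA : 0 < A) (q : ℕ) (hq : (q : ℝ) < (k : ℝ) - 2 - γ)
    (lam : ℕ → ℂ) (hlam0 : ∀ n, lam n ≠ 0)
    (hlam : Tendsto (fun n => ‖lam n‖) atTop atTop)
    (m : ℕ → ℕ) (σ : ℕ → ℝ) (hσ : ∀ n, 0 ≤ σ n) (c : ℕ → ℕ → ℂ)
    (hc : ∀ n, ∀ η ≤ m n,
      ‖c n η‖ ≤ A * σ n * (1 + ‖lam n‖) ^ (γ - (k : ℝ)))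
    (hsum : Summable fun n =>
      σ n * Bwt r (lam n) (q + 1) (m n) *
        (‖lam n‖ + 1) ^ (γ - (k : ℝ) + (q : ℝ) + 1) *
        Real.exp (r * |(lam n).im|))
    (R : ℝ) (hR : r < R)
    (hgrow : ∃ N > (0 : ℝ), ∃ θ : ℝ, θ < 1 / (R - r) ∧
      ∀ n, ‖lam n‖ > N →
        (|(lam n).im| + (m n : ℝ)) / Real.log (2 + ‖lam n‖) ≤ θ) :
    ConvergesInCk q R
      (fun n t => ∑ η ∈ Finset.range (m n + 1), c n η * eMon (lam n) η t) := by
  obtain ⟨N, hN, θ, hθ, hg⟩ := hgrow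
  have hRr : 0 < R - r := sub_pos.2 hR
  have hR0 : 0 < R := hr.trans hR
  have hx0 : ∀ n, 0 < ‖lam n‖ := fun n => norm_pos_iff.mpr (hlam0 n)
  have hθ0 : 0 ≤ θ := by
    obtain ⟨n, hn⟩ := (hlam.eventually_gt_atTop N).exists
    have hL : 0 < Real.log (2 + ‖lam n‖) :=
      Real.log_pos (by linarith [(hx0 n).le])
    have h1 := hg n hn
    have h0 : 0 ≤ (|(lam n).im| + (m n : ℝ)) / Real.log (2 + ‖lam n‖) := by
      positivity
    linarith
  set β := (R - r) * θ with hβ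
  have hβ0 : 0 ≤ β := mul_nonneg hRr.le hθ0
  have hβ1 : β < 1 := by
    have h := mul_lt_mul_of_pos_left hθ hRr
    rw [mul_one_div, div_self hRr.ne'] at h
    exact h
  set ε := (1 - β) / 2 with hε
  have hε0 : 0 < ε := by rw [hε]; linarith
  have hβε : β + ε ≤ 1 := by rw [hε]; linarith
  have hθε : 0 ≤ θ / ε + 1 := by
    have : 0 ≤ θ / ε := div_nonneg hθ0 hε0.le
    linarith
  have hθ10 : (0:ℝ) ≤ (θ + 1) ^ q := pow_nonneg (by linarith) q
  set C := 2 * ((θ / ε + 1) * (θ + 1) ^ q) * A with hC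
  clear_value C
  set U : ℕ → ℝ := fun n =>
    (((m n : ℝ) + 1) * ((m n : ℝ) + ‖lam n‖ + 1) ^ q *
      ((max 1 R) ^ (m n) * Real.exp (R * |(lam n).im|))) *
      (A * σ n * (1 + ‖lam n‖) ^ (γ - (k : ℝ))) with hU
  have hU0 : ∀ n, 0 ≤ U n := by
    intro n
    rw [hU]
    have h1 : 0 ≤ A * σ n * (1 + ‖lam n‖) ^ (γ - (k : ℝ)) := by
      apply mul_nonneg (mul_nonneg hA.le (hσ n))
      exact Real.rpow_nonneg (by positivity) _
    exact mul_nonneg (by positivity) h1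
  -- pointwise bound
  have hFb : ∀ j, j ≤ q → ∀ n, ∀ t ∈ Set.Icc (-R) R,
      ‖iteratedDeriv j
        (fun t => ∑ η ∈ Finset.range (m n + 1), c n η * eMon (lam n) η t) t‖ ≤ U n := by
    intro j hj n t ht
    have htR : |t| ≤ R := abs_le.2 ⟨ht.1, ht.2⟩
    rw [iteratedDeriv_fsum (Finset.range (m n + 1)) (fun η s => c n η * eMon (lam n) η s)
      (fun i _ => contDiff_const.mul (eMon_contDiff (lam n) i)) t]
    have hterm : ∀ η ∈ Finset.range (m n + 1),
        ‖iteratedDeriv j (fun s => c n η * eMon (lam n) η s) t‖ ≤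
          (((m n : ℝ) + ‖lam n‖ + 1) ^ q *
            ((max 1 R) ^ (m n) * Real.exp (R * |(lam n).im|))) *
            (A * σ n * (1 + ‖lam n‖) ^ (γ - (k : ℝ))) := by
      intro η hη
      have hηm : η ≤ m n := Nat.lt_succ_iff.1 (Finset.mem_range.1 hη)
      rw [iteratedDeriv_cmul (eMon_contDiff (lam n) η) (c n η) t, norm_mul]
      have hcb : ‖c n η‖ ≤ A * σ n * (1 + ‖lam n‖) ^ (γ - (k : ℝ)) := by
        exact hc n η hηm
      have hder := eMon_bound (lam n) j η t
      have hx0n := (hx0 n).le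
      have hmcast : ((η : ℝ)) ≤ (m n : ℝ) := Nat.cast_le.2 hηm
      have b1 : ((η : ℝ) + ‖lam n‖) ^ j
          ≤ ((m n : ℝ) + ‖lam n‖ + 1) ^ q := by
        calc ((η : ℝ) + ‖lam n‖) ^ j
            ≤ ((m n : ℝ) + ‖lam n‖ + 1) ^ j :=
              pow_le_pow_left₀ (by positivity) (by linarith) j
          _ ≤ ((m n : ℝ) + ‖lam n‖ + 1) ^ q :=
              pow_le_pow_right₀ (by linarith [Nat.cast_nonneg (α := ℝ) (m n)]) hj
      have b2 : (max 1 |t|) ^ η ≤ (max 1 R) ^ (m n) := by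
        calc (max 1 |t|) ^ η ≤ (max 1 R) ^ η :=
            pow_le_pow_left₀ (by positivity) (max_le_max le_rfl htR) η
          _ ≤ (max 1 R) ^ (m n) := pow_le_pow_right₀ (le_max_left 1 R) hηm
      have b3 : Real.exp (|(lam n).im| * |t|) ≤ Real.exp (R * |(lam n).im|) := by
        apply Real.exp_le_exp.2
        calc |(lam n).im| * |t| ≤ |(lam n).im| * R :=
            mul_le_mul_of_nonneg_left htR (abs_nonneg _)
          _ = R * |(lam n).im| := mul_comm _ _
      calc ‖c n η‖ * ‖iteratedDeriv j (eMon (lam n) η) t‖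
          ≤ (A * σ n * (1 + ‖lam n‖) ^ (γ - (k : ℝ))) *
            (((η : ℝ) + ‖lam n‖) ^ j * (max 1 |t|) ^ η *
              Real.exp (|(lam n).im| * |t|)) := by
            apply mul_le_mul hcb hder (norm_nonneg _)
            calc (0:ℝ) ≤ ‖c n η‖ := norm_nonneg _
              _ ≤ _ := hcb
        _ ≤ (A * σ n * (1 + ‖lam n‖) ^ (γ - (k : ℝ))) *
            (((m n : ℝ) + ‖lam n‖ + 1) ^ q * (max 1 R) ^ (m n) *
              Real.exp (R * |(lam n).im|)) := by
            apply mul_le_mul_of_nonneg_left _ (by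
              apply mul_nonneg (mul_nonneg hA.le (hσ n))
              exact Real.rpow_nonneg (by positivity) _)
            exact mul_le_mul (mul_le_mul b1 b2 (by positivity) (by positivity)) b3
              (by positivity) (by positivity)
        _ = (((m n : ℝ) + ‖lam n‖ + 1) ^ q *
              ((max 1 R) ^ (m n) * Real.exp (R * |(lam n).im|))) *
            (A * σ n * (1 + ‖lam n‖) ^ (γ - (k : ℝ))) := by ring
    calc ‖∑ η ∈ Finset.range (m n + 1), iteratedDeriv j (fun s => c n η * eMon (lam n) η s) t‖
        ≤ ∑ η ∈ Finset.range (m n + 1),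
            ‖iteratedDeriv j (fun s => c n η * eMon (lam n) η s) t‖ := norm_sum_le _ _
      _ ≤ ∑ _η ∈ Finset.range (m n + 1),
            ((((m n : ℝ) + ‖lam n‖ + 1) ^ q *
              ((max 1 R) ^ (m n) * Real.exp (R * |(lam n).im|))) *
              (A * σ n * (1 + ‖lam n‖) ^ (γ - (k : ℝ)))) :=
          Finset.sum_le_sum hterm
      _ = U n := by
          rw [Finset.sum_const, Finset.card_range, nsmul_eq_mul, hU]
          push_cast
          ring
  -- key comparison with the summable series
  have hkey : ∀ n, N < ‖lam n‖ → U n ≤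
      C * (σ n * Bwt r (lam n) (q + 1) (m n) *
        (‖lam n‖ + 1) ^ (γ - (k : ℝ) + (q : ℝ) + 1) *
        Real.exp (r * |(lam n).im|)) := by
    intro n hn
    set X := ‖lam n‖ with hXdef
    set b := |(lam n).im| with hbdef
    set L := Real.log (2 + X) with hLdef
    have hX0 : 0 < X := hx0 n
    have hb0 : 0 ≤ b := abs_nonneg _
    have hM0 : (0:ℝ) ≤ (m n : ℝ) := Nat.cast_nonneg _
    have h2X : (0:ℝ) < 2 + X := by linarith
    have h1X : (0:ℝ) < 1 + X := by linarith
    have hLpos : 0 < L := Real.log_pos (by linarith)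
    have hgn : b + (m n : ℝ) ≤ θ * L := by
      have h := hg n hn
      rwa [div_le_iff₀ hLpos] at h
    have hlog : L ≤ 1 + X := by
      have := Real.log_le_sub_one_of_pos h2X
      rw [← hLdef] at this
      linarith
    have hML : (m n : ℝ) ≤ θ * L := by linarith
    have hMX : (m n : ℝ) ≤ θ * (1 + X) :=
      hML.trans (mul_le_mul_of_nonneg_left hlog hθ0)
    have hεconst : (1:ℝ) ≤ (2 + X) ^ ε := by
      calc (1:ℝ) = (1:ℝ) ^ ε := (Real.one_rpow ε).symm
        _ ≤ (2 + X) ^ ε := Real.rpow_le_rpow zero_le_one (by linarith) hε0.le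
    have hLε : L ≤ (2 + X) ^ ε / ε := by
      have h1 := Real.log_le_sub_one_of_pos (Real.rpow_pos_of_pos h2X ε)
      rw [Real.log_rpow h2X] at h1
      rw [le_div_iff₀ hε0]
      have hcm : L * ε = ε * L := mul_comm L ε
      linarith
    have hm1 : (m n : ℝ) + 1 ≤ (θ / ε + 1) * (2 + X) ^ ε := by
      have h1 : (m n : ℝ) ≤ (θ / ε) * (2 + X) ^ ε := by
        calc (m n : ℝ) ≤ θ * L := hML
          _ ≤ θ * ((2 + X) ^ ε / ε) := mul_le_mul_of_nonneg_left hLε hθ0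
          _ = (θ / ε) * (2 + X) ^ ε := by ring
      have hexp2 : (θ / ε + 1) * (2 + X) ^ ε = (θ / ε) * (2 + X) ^ ε + (2 + X) ^ ε := by ring
      linarith
    have hpow : ((m n : ℝ) + X + 1) ^ q ≤ (θ + 1) ^ q * (1 + X) ^ q := by
      rw [← mul_pow]
      apply pow_le_pow_left₀ (by linarith)
      have hexp3 : (θ + 1) * (1 + X) = θ * (1 + X) + (1 + X) := by ring
      linarith
    have hBpos := Bwt_pos hr (lam n) (q + 1) (m n)
    have hBexp : (max 1 R) ^ (m n) * Real.exp (R * b)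
        ≤ Bwt r (lam n) (q + 1) (m n) * ((2 + X) ^ β * Real.exp (r * b)) := by
      have h1 := maxpow_le hr hR (q + 1) (m n) (lam n)
      have h2 : Real.exp ((R - r) * (m n : ℝ)) * Real.exp ((R - r) * b) ≤ (2 + X) ^ β := by
        rw [← Real.exp_add, Real.rpow_def_of_pos h2X]
        apply Real.exp_le_exp.2
        calc (R - r) * (m n : ℝ) + (R - r) * b = (R - r) * (b + (m n : ℝ)) := by ring
          _ ≤ (R - r) * (θ * L) := mul_le_mul_of_nonneg_left hgn hRr.le
          _ = Real.log (2 + X) * β := by rw [hLdef, hβ]; ring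
      have h3 : Real.exp (R * b) = Real.exp ((R - r) * b) * Real.exp (r * b) := by
        rw [← Real.exp_add]; ring_nf
      rw [h3]
      calc (max 1 R) ^ (m n) * (Real.exp ((R - r) * b) * Real.exp (r * b))
          ≤ (Bwt r (lam n) (q + 1) (m n) * Real.exp ((R - r) * (m n : ℝ)))
            * (Real.exp ((R - r) * b) * Real.exp (r * b)) :=
            mul_le_mul_of_nonneg_right h1
              (mul_nonneg (Real.exp_nonneg _) (Real.exp_nonneg _))
        _ = Bwt r (lam n) (q + 1) (m n)
            * ((Real.exp ((R - r) * (m n : ℝ)) * Real.exp ((R - r) * b))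
              * Real.exp (r * b)) := by ring
        _ ≤ Bwt r (lam n) (q + 1) (m n) * ((2 + X) ^ β * Real.exp (r * b)) := by
            apply mul_le_mul_of_nonneg_left _ hBpos.le
            exact mul_le_mul_of_nonneg_right h2 (Real.exp_nonneg _)
    have hεβ : (2 + X) ^ ε * (2 + X) ^ β ≤ 2 * (1 + X) := by
      rw [← Real.rpow_add h2X]
      calc (2 + X) ^ (ε + β) ≤ (2 * (1 + X)) ^ (ε + β) :=
            Real.rpow_le_rpow h2X.le (by linarith) (by linarith)
        _ = (2:ℝ) ^ (ε + β) * (1 + X) ^ (ε + β) := Real.mul_rpow zero_le_two h1X.le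
        _ ≤ (2:ℝ) ^ (1:ℝ) * (1 + X) ^ (1:ℝ) := by
            apply mul_le_mul
            · exact Real.rpow_le_rpow_of_exponent_le one_le_two (by linarith)
            · exact Real.rpow_le_rpow_of_exponent_le (by linarith) (by linarith)
            · exact Real.rpow_nonneg (by linarith) _
            · positivity
        _ = 2 * (1 + X) := by rw [Real.rpow_one, Real.rpow_one]
    have hcore : ((m n : ℝ) + 1) * ((m n : ℝ) + X + 1) ^ q
          * ((max 1 R) ^ (m n) * Real.exp (R * b))
        ≤ (2 * ((θ / ε + 1) * (θ + 1) ^ q)) * Bwt r (lam n) (q + 1) (m n)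
          * ((1 + X) ^ q * (1 + X)) * Real.exp (r * b) := by
      have hrhs0 : (0:ℝ) ≤ ((θ / ε + 1) * (2 + X) ^ ε) * ((θ + 1) ^ q * (1 + X) ^ q) := by
        apply mul_nonneg (mul_nonneg hθε (Real.rpow_nonneg h2X.le _))
        exact mul_nonneg hθ10 (pow_nonneg (by linarith) q)
      have hfirst : ((m n : ℝ) + 1) * ((m n : ℝ) + X + 1) ^ q
          ≤ ((θ / ε + 1) * (2 + X) ^ ε) * ((θ + 1) ^ q * (1 + X) ^ q) :=
        mul_le_mul hm1 hpow (pow_nonneg (by linarith) q)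
          (mul_nonneg hθε (Real.rpow_nonneg h2X.le _))
      have hmaxexp0 : (0:ℝ) ≤ (max 1 R) ^ (m n) * Real.exp (R * b) :=
        mul_nonneg (pow_nonneg (le_trans zero_le_one (le_max_left 1 R)) _) (Real.exp_nonneg _)
      calc ((m n : ℝ) + 1) * ((m n : ℝ) + X + 1) ^ q
            * ((max 1 R) ^ (m n) * Real.exp (R * b))
          ≤ (((θ / ε + 1) * (2 + X) ^ ε) * ((θ + 1) ^ q * (1 + X) ^ q))
            * (Bwt r (lam n) (q + 1) (m n) * ((2 + X) ^ β * Real.exp (r * b))) :=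
            mul_le_mul hfirst hBexp hmaxexp0 hrhs0
        _ = ((θ / ε + 1) * (θ + 1) ^ q) * Bwt r (lam n) (q + 1) (m n) * (1 + X) ^ q
            * Real.exp (r * b) * ((2 + X) ^ ε * (2 + X) ^ β) := by ring
        _ ≤ ((θ / ε + 1) * (θ + 1) ^ q) * Bwt r (lam n) (q + 1) (m n) * (1 + X) ^ q
            * Real.exp (r * b) * (2 * (1 + X)) := by
            apply mul_le_mul_of_nonneg_left hεβ
            apply mul_nonneg (mul_nonneg (mul_nonneg (mul_nonneg hθε hθ10) hBpos.le)
              (pow_nonneg (by linarith) q)) (Real.exp_nonneg _)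
        _ = _ := by ring
    have hrpow : (1 + X) ^ (γ - (k:ℝ)) * ((1 + X) ^ q * (1 + X))
        = (X + 1) ^ (γ - (k:ℝ) + (q:ℝ) + 1) := by
      rw [add_comm X 1]
      rw [show γ - (k:ℝ) + (q:ℝ) + 1 = (γ - (k:ℝ)) + (q:ℝ) + (1:ℝ) from by ring,
        Real.rpow_add h1X, Real.rpow_add h1X, Real.rpow_one, Real.rpow_natCast]
      ring
    have hArpos : 0 ≤ A * σ n * (1 + X) ^ (γ - (k:ℝ)) := by
      apply mul_nonneg (mul_nonneg hA.le (hσ n))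
      exact Real.rpow_nonneg h1X.le _
    calc U n = (((m n : ℝ) + 1) * ((m n : ℝ) + X + 1) ^ q *
          ((max 1 R) ^ (m n) * Real.exp (R * b))) * (A * σ n * (1 + X) ^ (γ - (k:ℝ))) := by
          simp only [hU, hXdef, hbdef]
      _ ≤ ((2 * ((θ / ε + 1) * (θ + 1) ^ q)) * Bwt r (lam n) (q + 1) (m n)
            * ((1 + X) ^ q * (1 + X)) * Real.exp (r * b))
          * (A * σ n * (1 + X) ^ (γ - (k:ℝ))) :=
          mul_le_mul_of_nonneg_right hcore hArpos
      _ = C * (σ n * Bwt r (lam n) (q + 1) (m n) *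
            (X + 1) ^ (γ - (k : ℝ) + (q : ℝ) + 1) * Real.exp (r * b)) := by
          rw [hC, ← hrpow]
          ring
  -- summability of the majorant
  have hUs : Summable U := by
    obtain ⟨n₀, hn₀⟩ := eventually_atTop.1 (hlam.eventually_gt_atTop N)
    have h1 : Summable (fun i : ℕ =>
        C * (σ (i + n₀) * Bwt r (lam (i + n₀)) (q + 1) (m (i + n₀)) *
          (‖lam (i + n₀)‖ + 1) ^ (γ - (k : ℝ) + (q : ℝ) + 1) *
          Real.exp (r * |(lam (i + n₀)).im|))) :=
      ((summable_nat_add_iff n₀).2 hsum).mul_left C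
    have h2 : Summable (fun i : ℕ => U (i + n₀)) :=
      h1.of_nonneg_of_le (fun i => hU0 _)
        (fun i => hkey _ (hn₀ _ (Nat.le_add_left n₀ i)))
    exact (summable_nat_add_iff n₀).1 h2
  intro j hj
  refine ⟨fun t ht => ?_, ?_⟩
  · exact hUs.of_nonneg_of_le (fun n => norm_nonneg _) (fun n => hFb j hj n t ht)
  · exact tendstoUniformlyOn_tsum_nat hUs (fun n t ht => hFb j hj n t ht)
end
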